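/- arXiv:1403.0238 — 3 statements merged into one kernel-verified Lean document; each statement's English description precedes it below -/
import Mathlib

section
/- Morse–Hedlund theorem: a biinfinite sequence x ∈ A^ℤ over a finite alphabet is periodic under the shift if and only if there exists n ≥ 1 such that the number of distinct length-n words occurring in x is at most n. -/
open Filter Topology

/-- The shift by `k`: `(shiftZ k x) i = x (i + k)`. `shiftZ 1` is the left shift `σ`. -/
def shiftZ {A : Type*} (k : ℤ) (x : ℤ → A) : ℤ → A := fun i => x (i + k)

/-- A subshift: a closed, shift-invariant subset of `A^ℤ`. -/
def IsSubshift {A : Type*} [TopologicalSpace A] (X : Set (ℤ → A)) : Prop :=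
  IsClosed X ∧ ∀ (k : ℤ), ∀ x ∈ X, shiftZ k x ∈ X

/-- `wordCount X n` = number of words of length `n` occurring (at the origin) in points of `X`. -/
noncomputable def wordCount {A : Type*} (X : Set (ℤ → A)) (n : ℕ) : ℕ :=
  Set.ncard { w : Fin n → A | ∃ x ∈ X, ∀ i : Fin n, x (i.val : ℤ) = w i }

/-- `ptWordCount x n` = number of words of length `n` occurring in the single point `x`. -/
noncomputable def ptWordCount {A : Type*} (x : ℤ → A) (n : ℕ) : ℕ :=
  Set.ncard { w : Fin n → A | ∃ a : ℤ, ∀ i : Fin n, x (a + (i.val : ℤ)) = w i }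

/-- `patternCount η n k` = number of `n × k` rectangular patterns occurring in `η : ℤ² → A`. -/
noncomputable def patternCount {A : Type*} (η : ℤ × ℤ → A) (n k : ℕ) : ℕ :=
  Set.ncard { β : Fin n × Fin k → A | ∃ a b : ℤ,
    ∀ p : Fin n × Fin k, η (a + (p.1.val : ℤ), b + (p.2.val : ℤ)) = β p }

/-- Subquadratic growth: `liminf P_X(n)/n² = 0`. -/
def Subquadratic {A : Type*} (X : Set (ℤ → A)) : Prop :=
  Filter.atTop.liminf (fun n : ℕ => (wordCount X n : ℝ) / (n : ℝ) ^ 2) = 0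

/-- Topological transitivity: some point of `X` has dense shift-orbit in `X`. -/
def TopTransitive {A : Type*} [TopologicalSpace A] (X : Set (ℤ → A)) : Prop :=
  ∃ x ∈ X, ∀ y ∈ X, y ∈ closure { z | ∃ k : ℤ, z = shiftZ k x }

/-- `φ` is a sliding block code of range `N`: `(φ x)(i)` is determined by `x(i-N)⋯x(i+N)`. -/
def HasRange {A : Type*} (X : Set (ℤ → A)) (φ : {x // x ∈ X} → {x // x ∈ X}) (N : ℕ) : Prop :=
  ∀ x y : {x // x ∈ X}, ∀ i : ℤ,
    (∀ j : ℤ, i - (N : ℤ) ≤ j → j ≤ i + (N : ℤ) → x.val j = y.val j) →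
      (φ x).val i = (φ y).val i

/-- `φ` commutes with the shift `σ` on `X` (stated extensionally on the subtype). -/
def CommutesWithShift {A : Type*} (X : Set (ℤ → A))
    (φ : {x // x ∈ X} → {x // x ∈ X}) : Prop :=
  ∀ x y : {x // x ∈ X}, y.val = shiftZ 1 x.val → (φ y).val = shiftZ 1 (φ x).val

/-- The `ℤ²`-configuration `η_{φ,x}(i,j) = (φ^j x)(i)`. -/
def eta {A : Type*} (X : Set (ℤ → A)) (φ : Equiv.Perm {x // x ∈ X})
    (x : {x // x ∈ X}) : ℤ × ℤ → A := fun p => ((φ ^ p.2) x).val p.1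

section MHaux

set_option linter.unusedSectionVars false
variable {A : Type*} [Finite A]

/-- auxiliary: the word of length `k` starting at `a`. -/
def mhW (x : ℤ → A) (k : ℕ) (a : ℤ) : Fin k → A := fun i => x (a + i.val)

lemma mh_ptWordCount_eq (x : ℤ → A) (n : ℕ) :
    ptWordCount x n = (Set.range (mhW x n)).ncard := by
  unfold ptWordCount
  congr 1
  ext w
  simp [mhW, funext_iff]

lemma mh_range_finite (x : ℤ → A) (k : ℕ) : (Set.range (mhW x k)).Finite :=
  Set.toFinite _

lemma mh_resR (x : ℤ → A) (k : ℕ) :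
    (fun w : Fin (k+1) → A => fun i : Fin k => w i.castSucc) '' Set.range (mhW x (k+1))
      = Set.range (mhW x k) := by
  rw [← Set.range_comp]
  congr 1

lemma mh_resL_apply (x : ℤ → A) (k : ℕ) (a : ℤ) :
    (fun i : Fin k => mhW x (k+1) a i.succ) = mhW x k (a + 1) := by
  funext i
  simp only [mhW, Fin.val_succ]
  congr 1
  push_cast
  ring

lemma mh_resL (x : ℤ → A) (k : ℕ) :
    (fun w : Fin (k+1) → A => fun i : Fin k => w i.succ) '' Set.range (mhW x (k+1))
      = Set.range (mhW x k) := by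
  rw [← Set.range_comp]
  ext w
  constructor
  · rintro ⟨a, rfl⟩
    exact ⟨a + 1, (mh_resL_apply x k a).symm⟩
  · rintro ⟨a, rfl⟩
    exact ⟨a - 1, by simpa using mh_resL_apply x k (a - 1)⟩

lemma mh_mono (x : ℤ → A) (k : ℕ) :
    (Set.range (mhW x k)).ncard ≤ (Set.range (mhW x (k+1))).ncard := by
  rw [← mh_resR x k]
  exact Set.ncard_image_le (mh_range_finite x (k+1))

lemma mh_zero (x : ℤ → A) : (Set.range (mhW x 0)).ncard = 1 := by
  have : Set.range (mhW x 0) = {mhW x 0 0} := by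
    ext w
    simp only [Set.mem_range, Set.mem_singleton_iff]
    constructor
    · rintro ⟨a, rfl⟩; funext i; exact absurd i.2 (by omega)
    · rintro rfl; exact ⟨0, rfl⟩
  rw [this, Set.ncard_singleton]

/-- From equal counts at `k` and `k+1`, same-`k`-word implies same `(k+1)`-word. -/
lemma mh_extR (x : ℤ → A) (k : ℕ)
    (h : (Set.range (mhW x (k+1))).ncard ≤ (Set.range (mhW x k)).ncard)
    (a b : ℤ) (hab : mhW x k a = mhW x k b) : mhW x (k+1) a = mhW x (k+1) b := by
  have hinj : Set.InjOn (fun w : Fin (k+1) → A => fun i : Fin k => w i.castSucc)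
      (Set.range (mhW x (k+1))) := by
    refine Set.injOn_of_ncard_image_eq ?_ (mh_range_finite x (k+1))
    rw [mh_resR x k]
    exact le_antisymm (mh_mono x k) h
  apply hinj ⟨a, rfl⟩ ⟨b, rfl⟩
  funext i
  have : mhW x k a i = mhW x k b i := by rw [hab]
  simpa [mhW] using this

lemma mh_extL (x : ℤ → A) (k : ℕ)
    (h : (Set.range (mhW x (k+1))).ncard ≤ (Set.range (mhW x k)).ncard)
    (a b : ℤ) (hab : mhW x k a = mhW x k b) :
    mhW x (k+1) (a - 1) = mhW x (k+1) (b - 1) := by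
  have hinj : Set.InjOn (fun w : Fin (k+1) → A => fun i : Fin k => w i.succ)
      (Set.range (mhW x (k+1))) := by
    refine Set.injOn_of_ncard_image_eq ?_ (mh_range_finite x (k+1))
    rw [mh_resL x k]
    exact le_antisymm (mh_mono x k) h
  apply hinj ⟨a - 1, rfl⟩ ⟨b - 1, rfl⟩
  have ha := mh_resL_apply x k (a - 1)
  have hb := mh_resL_apply x k (b - 1)
  simp only [sub_add_cancel] at ha hb
  show (fun i : Fin k => mhW x (k+1) (a-1) i.succ) = fun i : Fin k => mhW x (k+1) (b-1) i.succ
  exact ha.trans (hab.trans hb.symm)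

lemma mh_stepR (x : ℤ → A) (k : ℕ)
    (h : (Set.range (mhW x (k+1))).ncard ≤ (Set.range (mhW x k)).ncard)
    (a b : ℤ) (hab : mhW x k a = mhW x k b) : mhW x k (a + 1) = mhW x k (b + 1) := by
  have := mh_extR x k h a b hab
  rw [← mh_resL_apply x k a, ← mh_resL_apply x k b, this]

lemma mh_stepL (x : ℤ → A) (k : ℕ)
    (h : (Set.range (mhW x (k+1))).ncard ≤ (Set.range (mhW x k)).ncard)
    (a b : ℤ) (hab : mhW x k a = mhW x k b) : mhW x k (a - 1) = mhW x k (b - 1) := by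
  have hext := mh_extL x k h a b hab
  funext i
  have : mhW x (k+1) (a-1) i.castSucc = mhW x (k+1) (b-1) i.castSucc := by rw [hext]
  simpa [mhW] using this

lemma mh_all (x : ℤ → A) (k : ℕ)
    (h : (Set.range (mhW x (k+1))).ncard ≤ (Set.range (mhW x k)).ncard)
    (a b : ℤ) (hab : mhW x k a = mhW x k b) :
    ∀ m : ℤ, mhW x k (a + m) = mhW x k (b + m) := by
  intro m
  induction m using Int.induction_on with
  | zero => simpa using hab
  | succ m ih =>
      have := mh_stepR x k h _ _ ih
      rw [show a + (↑m + 1) = a + ↑m + 1 by ring, show b + (↑m + 1) = b + ↑m + 1 by ring]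
      exact this
  | pred m ih =>
      have := mh_stepL x k h _ _ ih
      rw [show a + (-↑m - 1) = a + (-↑m) - 1 by ring, show b + (-↑m - 1) = b + (-↑m) - 1 by ring]
      exact this

end MHaux

/-- the Morse–Hedlund theorem. -/
theorem stmt3 {A : Type*} [Finite A] (x : ℤ → A) :
    (∃ p : ℤ, p ≠ 0 ∧ shiftZ p x = x) ↔ ∃ n : ℕ, 1 ≤ n ∧ ptWordCount x n ≤ n := by
  constructor
  · rintro ⟨p, hp0, hper⟩
    have hx : ∀ i, x (i + p) = x i := fun i => congrFun hper i
    obtain ⟨q, hq, hxq⟩ : ∃ q : ℤ, 0 < q ∧ ∀ i, x (i + q) = x i := by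
      rcases lt_or_gt_of_ne hp0 with h | h
      · refine ⟨-p, by omega, fun i => ?_⟩
        have h2 := hx (i + -p)
        rw [show i + -p + p = i by ring] at h2
        exact h2.symm
      · exact ⟨p, h, hx⟩
    have hmul : ∀ m : ℤ, ∀ c : ℤ, x (c + m * q) = x c := by
      intro m
      induction m using Int.induction_on with
      | zero => simp
      | succ m ih =>
          intro c
          have h1 := hxq (c + (m : ℤ) * q)
          rw [show c + ((m : ℤ) + 1) * q = c + (m : ℤ) * q + q by ring]
          rw [h1, ih c]
      | pred m ih =>
          intro c
          have h1 := hxq (c + (-(m : ℤ) - 1) * q)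
          rw [show c + (-(m : ℤ) - 1) * q + q = c + (-(m : ℤ)) * q by ring] at h1
          rw [← h1]
          exact ih c
    refine ⟨q.toNat, by omega, ?_⟩
    rw [mh_ptWordCount_eq]
    set n := q.toNat with hn
    have hsub : Set.range (mhW x n) ⊆ Set.range (fun j : Fin n => mhW x n (j.val : ℤ)) := by
      rintro _ ⟨a, rfl⟩
      have h0 : (0:ℤ) ≤ a % q := Int.emod_nonneg a (by omega)
      have h1 : a % q < q := Int.emod_lt_of_pos a hq
      refine ⟨⟨(a % q).toNat, by omega⟩, ?_⟩
      funext i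
      simp only [mhW]
      rw [Int.toNat_of_nonneg h0]
      have hm := hmul (a / q) (a % q + (i.val : ℤ))
      rw [show a % q + (i.val : ℤ) + a / q * q = a + (i.val : ℤ) by
        linarith [Int.emod_add_mul_ediv a q, mul_comm q (a / q)]] at hm
      exact hm.symm
    calc (Set.range (mhW x n)).ncard
        ≤ (Set.range (fun j : Fin n => mhW x n (j.val : ℤ))).ncard :=
          Set.ncard_le_ncard hsub (Set.toFinite _)
      _ ≤ n := by
          rw [← Set.image_univ]
          calc ((fun j : Fin n => mhW x n (j.val : ℤ)) '' Set.univ).ncard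
              ≤ (Set.univ : Set (Fin n)).ncard := Set.ncard_image_le (Set.toFinite _)
            _ = n := by rw [Set.ncard_univ, Nat.card_eq_fintype_card, Fintype.card_fin]
  · rintro ⟨n, hn1, hcnt⟩
    rw [mh_ptWordCount_eq] at hcnt
    have hstall : ∃ k, k < n ∧
        (Set.range (mhW x (k+1))).ncard ≤ (Set.range (mhW x k)).ncard := by
      by_contra hc
      push_neg at hc
      have grow : ∀ m, m ≤ n → m + 1 ≤ (Set.range (mhW x m)).ncard := by
        intro m
        induction m with
        | zero => intro _; rw [mh_zero]
        | succ m ih =>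
            intro hm
            have h1 := ih (by omega)
            have h2 := hc m (by omega)
            omega
      have := grow n le_rfl
      omega
    obtain ⟨k, hkn, hk⟩ := hstall
    rcases Nat.eq_zero_or_pos k with hk0 | hk0
    · subst hk0
      rw [mh_zero] at hk
      have hsub : ∀ a b : ℤ, mhW x 1 a = mhW x 1 b := by
        have := (Set.ncard_le_one (mh_range_finite x 1)).mp hk
        intro a b
        exact this (mhW x 1 a) ⟨a, rfl⟩ (mhW x 1 b) ⟨b, rfl⟩
      have hconst : ∀ a b : ℤ, x a = x b := by
        intro a b
        have := congrFun (hsub a b) ⟨0, Nat.one_pos⟩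
        simpa [mhW] using this
      exact ⟨1, one_ne_zero, funext fun i => hconst (i + 1) i⟩
    · obtain ⟨a, b, hab, heq⟩ := Finite.exists_ne_map_eq_of_infinite (mhW x k)
      have hall := mh_all x k hk a b heq
      have hx' : ∀ m : ℤ, x (a + m) = x (b + m) := by
        intro m
        have := congrFun (hall m) ⟨0, hk0⟩
        simpa [mhW] using this
      refine ⟨a - b, sub_ne_zero.mpr hab, funext fun i => ?_⟩
      show x (i + (a - b)) = x i
      have h := hx' (i - b)
      rw [show a + (i - b) = i + (a - b) by ring, show b + (i - b) = i by ring] at h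
      exact h
end

section
/- If φ is an automorphism of a subshift X such that both φ and φ^{-1} are sliding block codes of range N, then for every x ∈ X and all n, k ≥ 1, the rectangular complexity of the ℤ²-configuration η_{φ,x} satisfies P_{η_{φ,x}}(n,k) ≤ P_X(2N(k-1) + n). -/
open Filter Topology

section Aux

variable {A : Type*} {X : Set (ℤ → A)}

lemma shiftZ_shiftZ (a b : ℤ) (v : ℤ → A) : shiftZ a (shiftZ b v) = shiftZ (a + b) v := by
  funext i; simp [shiftZ, add_assoc]

lemma hasRange_pow (φ : Equiv.Perm {x // x ∈ X}) (N : ℕ) (hr : HasRange X φ N) :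
    ∀ j : ℕ, HasRange X (⇑(φ ^ j)) (j * N) := by
  intro j
  induction j with
  | zero =>
      intro x y i h
      simpa using h i (by simp) (by simp)
  | succ j ih =>
      intro x y i h
      have hx : (φ ^ (j + 1)) x = φ ((φ ^ j) x) := by
        rw [pow_succ']; rfl
      have hy : (φ ^ (j + 1)) y = φ ((φ ^ j) y) := by
        rw [pow_succ']; rfl
      rw [hx, hy]
      apply hr
      intro j' h1 h2
      apply ih
      intro j'' h1' h2'
      apply h j''
      · have : ((j + 1) * N : ℕ) = (j * N + N : ℕ) := by ring
        rw [this]; push_cast; push_cast at h1 h1'; linarith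
      · have : ((j + 1) * N : ℕ) = (j * N + N : ℕ) := by ring
        rw [this]; push_cast; push_cast at h2 h2'; linarith

lemma shift_comm [TopologicalSpace A] (hX : IsSubshift X) (φ : Equiv.Perm {x // x ∈ X})
    (hcomm : CommutesWithShift X φ) :
    ∀ (a : ℤ) (y : {x // x ∈ X}),
      (φ ⟨shiftZ a y.val, hX.2 a y.val y.2⟩).val = shiftZ a (φ y).val := by
  intro a
  induction a using Int.induction_on with
  | zero =>
      intro y
      have h0 : (⟨shiftZ 0 y.val, hX.2 0 y.val y.2⟩ : {x // x ∈ X}) = y := by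
        apply Subtype.ext; funext i; simp [shiftZ]
      rw [h0]; funext i; simp [shiftZ]
  | succ a ih =>
      intro y
      have hz : shiftZ ((a : ℤ) + 1) y.val = shiftZ 1 (shiftZ a y.val) := by
        rw [shiftZ_shiftZ]; ring_nf
      have hc := hcomm ⟨shiftZ a y.val, hX.2 a y.val y.2⟩
        ⟨shiftZ ((a : ℤ) + 1) y.val, hX.2 _ y.val y.2⟩ hz
      rw [hc, ih y, shiftZ_shiftZ]; ring_nf
  | pred a ih =>
      intro y
      have hz : shiftZ (-(a : ℤ)) y.val = shiftZ 1 (shiftZ (-(a : ℤ) - 1) y.val) := by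
        rw [shiftZ_shiftZ]; ring_nf
      have hc := hcomm ⟨shiftZ (-(a : ℤ) - 1) y.val, hX.2 _ y.val y.2⟩
        ⟨shiftZ (-(a : ℤ)) y.val, hX.2 _ y.val y.2⟩ hz
      funext i
      have := congrFun hc (i - 1)
      rw [ih y] at this
      simpa [shiftZ, sub_add_cancel] using this.symm.trans (by simp [shiftZ]; ring_nf)

lemma shift_comm_pow [TopologicalSpace A] (hX : IsSubshift X) (φ : Equiv.Perm {x // x ∈ X})
    (hcomm : CommutesWithShift X φ) :
    ∀ (j : ℕ) (a : ℤ) (y : {x // x ∈ X}),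
      ((φ ^ j) ⟨shiftZ a y.val, hX.2 a y.val y.2⟩).val = shiftZ a ((φ ^ j) y).val := by
  intro j
  induction j with
  | zero => intro a y; simp
  | succ j ih =>
      intro a y
      have hx : (φ ^ (j + 1)) (⟨shiftZ a y.val, hX.2 a y.val y.2⟩ : {x // x ∈ X})
          = φ ((φ ^ j) ⟨shiftZ a y.val, hX.2 a y.val y.2⟩) := by
        rw [pow_succ']; rfl
      have he : (φ ^ j) (⟨shiftZ a y.val, hX.2 a y.val y.2⟩ : {x // x ∈ X})
          = ⟨shiftZ a ((φ ^ j) y).val, hX.2 a ((φ ^ j) y).val ((φ ^ j) y).2⟩ :=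
        Subtype.ext (ih a y)
      rw [hx, he, shift_comm hX φ hcomm a ((φ ^ j) y)]
      have : (φ ^ (j + 1)) y = φ ((φ ^ j) y) := by rw [pow_succ']; rfl
      rw [this]

end Aux

/-- rectangular complexity bound `P_{η_{φ,x}}(n,k) ≤ P_X(2N(k-1)+n)`. -/
theorem stmt5 {A : Type*} [Finite A] [TopologicalSpace A] [DiscreteTopology A]
    (X : Set (ℤ → A)) (hX : IsSubshift X)
    (φ : Equiv.Perm {x // x ∈ X}) (hcomm : CommutesWithShift X φ) (N : ℕ)
    (hr : HasRange X φ N) (hr' : HasRange X φ.symm N)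
    (x : {x // x ∈ X}) (n k : ℕ) (hn : 1 ≤ n) (hk : 1 ≤ k) :
    patternCount (eta X φ x) n k ≤ wordCount X (2 * N * (k - 1) + n) := by
  classical
  set m : ℕ := 2 * N * (k - 1) + n with hm
  set L : ℤ := (N : ℤ) * ((k : ℤ) - 1) with hL
  have hLm : (m : ℤ) = 2 * L + n := by
    rw [hm, hL]; push_cast [Nat.cast_sub hk]; ring
  have hL0 : 0 ≤ L := by
    rw [hL]
    have h1 : (1 : ℤ) ≤ (k : ℤ) := by exact_mod_cast hk
    have h2 : (0 : ℤ) ≤ (N : ℤ) := Int.natCast_nonneg N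
    nlinarith
  -- the pattern set and word set
  set S := { β : Fin n × Fin k → A | ∃ a b : ℤ,
    ∀ p : Fin n × Fin k, eta X φ x (a + (p.1.val : ℤ), b + (p.2.val : ℤ)) = β p } with hS
  set T := { w : Fin m → A | ∃ z ∈ X, ∀ i : Fin m, z (i.val : ℤ) = w i } with hT
  rcases isEmpty_or_nonempty A with hA | hA
  · have : S = ∅ := by
      ext β
      simp only [Set.mem_empty_iff_false, iff_false]
      intro _
      exact (hA.elim (β (⟨0, hn⟩, ⟨0, hk⟩)))
    show S.ncard ≤ T.ncard
    simp [this]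
  · inhabit A
    -- the coding map
    have key : ∀ (a b a' b' : ℤ)
        (hab : ∀ p : Fin n × Fin k, eta X φ x (a + (p.1.val : ℤ), b + (p.2.val : ℤ)) =
          eta X φ x (a' + (p.1.val : ℤ), b' + (p.2.val : ℤ)) → True), True := fun _ _ _ _ _ => trivial
    clear key
    set f : (Fin n × Fin k → A) → (Fin m → A) := fun β =>
      if h : β ∈ S then
        fun t => ((φ ^ h.choose_spec.choose) x).val ((t.val : ℤ) + (h.choose - L))
      else fun _ => default
    have hmem : ∀ β ∈ S, f β ∈ T := by
      intro β hβ
      refine ⟨shiftZ (hβ.choose - L) ((φ ^ hβ.choose_spec.choose) x).val,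
        hX.2 _ _ ((φ ^ hβ.choose_spec.choose) x).2, ?_⟩
      intro t
      simp only [f, dif_pos hβ, shiftZ]
    -- key computation: the word determines the pattern
    have hpat : ∀ (a b : ℤ) (β : Fin n × Fin k → A),
        (∀ p : Fin n × Fin k, eta X φ x (a + (p.1.val : ℤ), b + (p.2.val : ℤ)) = β p) →
        ∀ p : Fin n × Fin k,
          β p = ((φ ^ p.2.val) (⟨shiftZ a ((φ ^ b) x).val,
            hX.2 a _ ((φ ^ b) x).2⟩ : {x // x ∈ X})).val p.1.val := by
      intro a b β hspec p
      rw [← hspec p]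
      have hexp : φ ^ (b + (p.2.val : ℤ)) = φ ^ (p.2.val : ℕ) * φ ^ b := by
        rw [add_comm, zpow_add, zpow_natCast]
      show ((φ ^ (b + (p.2.val : ℤ))) x).val (a + (p.1.val : ℤ)) = _
      rw [hexp, Equiv.Perm.mul_apply,
        shift_comm_pow hX φ hcomm p.2.val a ((φ ^ b) x)]
      simp [shiftZ, add_comm]
    have main : ∀ (a b a' b' : ℤ) (β β' : Fin n × Fin k → A),
        (∀ p : Fin n × Fin k, eta X φ x (a + (p.1.val : ℤ), b + (p.2.val : ℤ)) = β p) →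
        (∀ p : Fin n × Fin k, eta X φ x (a' + (p.1.val : ℤ), b' + (p.2.val : ℤ)) = β' p) →
        (∀ t : Fin m, ((φ ^ b) x).val ((t.val : ℤ) + (a - L)) =
          ((φ ^ b') x).val ((t.val : ℤ) + (a' - L))) →
        β = β' := by
      intro a b a' b' β β' hspec hspec' hw
      funext p
      rw [hpat a b β hspec p, hpat a' b' β' hspec' p]
      apply hasRange_pow φ N hr p.2.val
      intro s hs1 hs2
      show ((φ ^ b) x).val (s + a) = ((φ ^ b') x).val (s + a')
      have hjk : ((p.2.val : ℤ) * N) ≤ L := by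
        rw [hL]
        have h1 : (p.2.val : ℤ) ≤ (k : ℤ) - 1 := by
          have := p.2.isLt; omega
        have h2 : (0 : ℤ) ≤ (N : ℤ) := Int.natCast_nonneg N
        nlinarith
      have hi1 : (0 : ℤ) ≤ (p.1.val : ℤ) := Int.natCast_nonneg _
      have hi2 : (p.1.val : ℤ) ≤ (n : ℤ) - 1 := by
        have := p.1.isLt; omega
      have hcast : ((p.2.val * N : ℕ) : ℤ) = (p.2.val : ℤ) * N := by push_cast; ring
      rw [hcast] at hs1 hs2
      have hs0 : 0 ≤ s + L := by linarith
      have hsm : s + L < (m : ℤ) := by rw [hLm]; linarith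
      have ht : (s + L).toNat < m := by omega
      have := hw ⟨(s + L).toNat, ht⟩
      simp only at this
      have harg : (((s + L).toNat : ℤ)) = s + L := Int.toNat_of_nonneg hs0
      rw [harg] at this
      have e1 : s + L + (a - L) = s + a := by ring
      have e2 : s + L + (a' - L) = s + a' := by ring
      rw [e1, e2] at this
      exact this
    have hinj : Set.InjOn f S := by
      intro β hβ β' hβ' hff
      exact main hβ.choose hβ.choose_spec.choose hβ'.choose hβ'.choose_spec.choose β β'
        hβ.choose_spec.choose_spec hβ'.choose_spec.choose_spec
        (fun t => by simpa only [f, dif_pos hβ, dif_pos hβ'] using congrFun hff t)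
    calc S.ncard ≤ T.ncard :=
      Set.ncard_le_ncard_of_injOn f hmem hinj (Set.toFinite T)
end

section
/- Let X be a topologically transitive subshift. Suppose x₁, x₂ ∈ X, F ⊆ ℤ²\{0} is finite, φ ∈ Aut(X), and for m = 1, 2 let V_{x_m} be the set of vectors in F that are period vectors of η_{φ,x_m}. If V_{x_1} ∩ V_{x_2} = ∅ and every η_{φ,x} (x ∈ X) has a period vector in F, then we reach a contradiction; hence V_{x_1} ∩ V_{x_2} ≠ ∅ whenever both are determined this way. -/
open Filter Topology

namespace Stmt17Aux

variable {A : Type*}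

lemma shiftZ_apply (a : ℤ) (x : ℤ → A) (i : ℤ) : shiftZ a x i = x (i + a) := rfl

lemma shiftZ_comp (a b : ℤ) (x : ℤ → A) : shiftZ a (shiftZ b x) = shiftZ (a + b) x := by
  funext i
  simp only [shiftZ]
  congr 1
  ring

lemma shiftZ_zero (x : ℤ → A) : shiftZ 0 x = x := by
  funext i; simp [shiftZ]

/-- one-step commutation with all shifts -/
def Comm1 (X : Set (ℤ → A)) (ψ : {x // x ∈ X} → {x // x ∈ X}) : Prop :=
  ∀ (m : ℤ) (x y : {x // x ∈ X}), y.val = shiftZ m x.val → (ψ y).val = shiftZ m (ψ x).val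

lemma comm1_of_commutes [TopologicalSpace A] (X : Set (ℤ → A)) (hX : IsSubshift X)
    (φ : Equiv.Perm {x // x ∈ X}) (hcomm : CommutesWithShift X φ) : Comm1 X φ := by
  have hnat : ∀ (n : ℕ) (x y : {x // x ∈ X}), y.val = shiftZ (n : ℤ) x.val →
      (φ y).val = shiftZ (n : ℤ) (φ x).val := by
    intro n
    induction n with
    | zero =>
      intro x y h
      rw [Int.natCast_zero, shiftZ_zero] at h ⊢
      rw [Subtype.ext h]
    | succ n ih =>
      intro x y h
      have hzX : shiftZ (n : ℤ) x.val ∈ X := hX.2 n x.val x.2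
      set z : {x // x ∈ X} := ⟨shiftZ (n : ℤ) x.val, hzX⟩ with hz
      have h1 : y.val = shiftZ 1 z.val := by
        rw [h]
        show shiftZ ((n : ℤ) + 1) x.val = shiftZ 1 (shiftZ (n : ℤ) x.val)
        rw [shiftZ_comp]
        congr 1
        ring
      have h2 : (φ y).val = shiftZ 1 (φ z).val := hcomm z y h1
      have h3 : (φ z).val = shiftZ (n : ℤ) (φ x).val := ih x z rfl
      rw [h2, h3, shiftZ_comp]
      congr 1
      push_cast
      ring
  intro m x y h
  rcases le_or_gt 0 m with hm | hm
  · lift m to ℕ using hm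
    exact hnat m x y h
  · have hback : x.val = shiftZ (-m) y.val := by
      rw [h, shiftZ_comp]
      simp [shiftZ_zero]
    obtain ⟨n, hn⟩ : ∃ n : ℕ, (n : ℤ) = -m := ⟨(-m).toNat, by omega⟩
    have := hnat n y x (by rw [hn]; exact hback)
    rw [hn] at this
    funext i
    have := congrFun this (i + m)
    simp only [shiftZ] at this ⊢
    rw [show i + m + -m = i by ring] at this
    exact this.symm

lemma comm1_inv [TopologicalSpace A] (X : Set (ℤ → A)) (hX : IsSubshift X)
    (φ : Equiv.Perm {x // x ∈ X}) (h : Comm1 X φ) : Comm1 X ⇑φ⁻¹ := by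
  intro m x y hxy
  set u := φ⁻¹ x with hu
  have huX : shiftZ m u.val ∈ X := hX.2 m u.val u.2
  set u' : {x // x ∈ X} := ⟨shiftZ m u.val, huX⟩ with hu'
  have h1 : (φ u').val = shiftZ m (φ u).val := h m u u' rfl
  have h2 : φ u = x := Equiv.apply_symm_apply φ x
  have h3 : (φ u').val = y.val := by rw [h1, h2, hxy]
  have h4 : φ u' = y := Subtype.ext h3
  have h5 : φ⁻¹ y = u' := by rw [← h4]; exact Equiv.symm_apply_apply φ u'
  rw [h5]

lemma comm1_pow (X : Set (ℤ → A)) (φ : Equiv.Perm {x // x ∈ X}) (h : Comm1 X φ)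
    (k : ℕ) : Comm1 X ⇑(φ ^ k) := by
  induction k with
  | zero =>
    intro m x y hxy
    simpa using hxy
  | succ k ih =>
    intro m x y hxy
    have e : ∀ z : {x // x ∈ X}, (φ ^ (k + 1)) z = φ ((φ ^ k) z) := by
      intro z; rw [pow_succ']; rfl
    rw [e, e]
    exact h m ((φ ^ k) x) ((φ ^ k) y) (ih m x y hxy)

lemma comm1_zpow [TopologicalSpace A] (X : Set (ℤ → A)) (hX : IsSubshift X)
    (φ : Equiv.Perm {x // x ∈ X}) (h : Comm1 X φ) (j : ℤ) : Comm1 X ⇑(φ ^ j) := by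
  rcases j with n | n
  · rw [Int.ofNat_eq_coe, zpow_natCast]
    exact comm1_pow X φ h n
  · rw [zpow_negSucc, ← inv_pow]
    exact comm1_pow X φ⁻¹ (comm1_inv X hX φ h) (n + 1)

lemma pow_range (X : Set (ℤ → A)) (φ : Equiv.Perm {x // x ∈ X}) (N : ℕ)
    (hr : HasRange X φ N) (k : ℕ) :
    ∀ x y : {x // x ∈ X}, ∀ i : ℤ,
      (∀ j : ℤ, i - (k : ℤ) * N ≤ j → j ≤ i + (k : ℤ) * N → x.val j = y.val j) →
      ((φ ^ k) x).val i = ((φ ^ k) y).val i := by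
  induction k with
  | zero =>
    intro x y i h
    have := h i (by simp) (by simp)
    simpa using this
  | succ k ih =>
    intro x y i h
    have e : ∀ z : {x // x ∈ X}, (φ ^ (k + 1)) z = φ ((φ ^ k) z) := by
      intro z; rw [pow_succ']; rfl
    rw [e, e]
    apply hr ((φ ^ k) x) ((φ ^ k) y) i
    intro j hj1 hj2
    apply ih x y j
    intro j' h1 h2
    have hkk : ((k : ℤ) + 1) * N = (k : ℤ) * N + N := by ring
    apply h j' (by push_cast; linarith) (by push_cast; linarith)

end Stmt17Aux

/-- if every `η_{φ,x}` has a period vector in `F` but the sets of `F`-period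
vectors of `η_{φ,x₁}` and `η_{φ,x₂}` are disjoint, we reach a contradiction. -/
theorem stmt17 {A : Type*} [Finite A] [TopologicalSpace A] [DiscreteTopology A]
    (X : Set (ℤ → A)) (hX : IsSubshift X) (htr : TopTransitive X)
    (φ : Equiv.Perm {x // x ∈ X}) (hcomm : CommutesWithShift X φ) (N : ℕ)
    (hr : HasRange X φ N)
    (x₁ x₂ : {x // x ∈ X}) (F : Finset (ℤ × ℤ)) (h0 : ((0, 0) : ℤ × ℤ) ∉ F)
    (hper : ∀ x : {x // x ∈ X}, ∃ v ∈ F, ∀ w : ℤ × ℤ, eta X φ x (w + v) = eta X φ x w)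
    (hdisj : ∀ v ∈ F, ¬((∀ w : ℤ × ℤ, eta X φ x₁ (w + v) = eta X φ x₁ w) ∧
      (∀ w : ℤ × ℤ, eta X φ x₂ (w + v) = eta X φ x₂ w))) :
    False := by
  classical
  obtain ⟨xi, hxiX, hdense⟩ := htr
  set xi' : {x // x ∈ X} := ⟨xi, hxiX⟩ with hxi'
  obtain ⟨v, hvF, hfull⟩ := hper xi'
  have hc1 : Stmt17Aux.Comm1 X ⇑φ := Stmt17Aux.comm1_of_commutes X hX φ hcomm
  set k : ℕ := v.2.natAbs with hkdef
  set b : ℤ := if 0 ≤ v.2 then -v.1 else v.1 with hbdef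
  -- the single-row natural-power form of the period condition holds for xi'
  have hnatxi : ((φ ^ k) xi').val = shiftZ b xi'.val := by
    by_cases h2 : 0 ≤ v.2
    · have hk : (k : ℤ) = v.2 := by simp [hkdef]; omega
      have hb : b = -v.1 := hbdef.trans (if_pos h2)
      funext i
      have hw := hfull (i - v.1, 0)
      simp only [eta, Prod.fst_add, Prod.snd_add, zero_add, zpow_zero,
        Equiv.Perm.coe_one, id_eq] at hw
      rw [show i - v.1 + v.1 = i by ring] at hw
      rw [← hk, zpow_natCast] at hw
      rw [hw]
      show xi (i - v.1) = xi (i + b)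
      rw [hb, show i + -v.1 = i - v.1 from by ring]
    · have hk : (k : ℤ) = -v.2 := by simp [hkdef]; omega
      have hb : b = v.1 := hbdef.trans (if_neg h2)
      funext i
      have hw := hfull (i, -v.2)
      simp only [eta, Prod.fst_add, Prod.snd_add, neg_add_cancel, zpow_zero,
        Equiv.Perm.coe_one, id_eq] at hw
      rw [← hk, zpow_natCast] at hw
      rw [← hw]
      show xi (i + v.1) = xi (i + b)
      rw [hb]
  -- transfer to every point of X
  have key : ∀ (y : ℤ → A) (hy : y ∈ X),
      ((φ ^ k) (⟨y, hy⟩ : {x // x ∈ X})).val = shiftZ b y := by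
    intro y hy
    funext i
    set T : Finset ℤ := Finset.Icc (i - (k : ℤ) * N) (i + (k : ℤ) * N) ∪ {i + b} with hT
    set U : Set (ℤ → A) := ⋂ j ∈ T, {z : ℤ → A | z j = y j} with hU
    have hUopen : IsOpen U := by
      apply isOpen_biInter_finset
      intro j _
      have hpre : {z : ℤ → A | z j = y j} = (fun z : ℤ → A => z j) ⁻¹' {y j} := rfl
      rw [hpre]
      exact IsOpen.preimage (continuous_apply j) (isOpen_discrete ({y j} : Set A))
    have hyU : y ∈ U := by
      simp only [hU, Set.mem_iInter, Set.mem_setOf_eq]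
      intro j _
      trivial
    obtain ⟨z, hzU, hzS⟩ := mem_closure_iff.mp (hdense y hy) U hUopen hyU
    obtain ⟨m, rfl⟩ := hzS
    have hzmem : ∀ j ∈ T, shiftZ m xi j = y j := by
      intro j hj
      have := Set.mem_iInter.mp hzU j
      exact Set.mem_iInter.mp (Set.mem_iInter.mp hzU j) hj
    have hzetX : shiftZ m xi ∈ X := hX.2 m xi hxiX
    set zeta : {x // x ∈ X} := ⟨shiftZ m xi, hzetX⟩ with hzeta
    have h1 : ((φ ^ k) (⟨y, hy⟩ : {x // x ∈ X})).val i = ((φ ^ k) zeta).val i := by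
      apply Stmt17Aux.pow_range X φ N hr k
      intro j hj1 hj2
      exact (hzmem j (by rw [hT]; simp only [Finset.mem_union, Finset.mem_Icc, Finset.mem_singleton]; exact Or.inl ⟨hj1, hj2⟩)).symm
    have h2 : ((φ ^ k) zeta).val = shiftZ m ((φ ^ k) xi').val :=
      Stmt17Aux.comm1_pow X φ hc1 k m xi' zeta rfl
    have h3 : ((φ ^ k) zeta).val i = y (i + b) := by
      rw [h2, hnatxi]
      have : shiftZ m (shiftZ b xi) i = shiftZ m xi (i + b) := by
        simp only [shiftZ]; congr 1; ring
      rw [this]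
      exact hzmem (i + b) (by rw [hT]; simp only [Finset.mem_union, Finset.mem_singleton]; exact Or.inr trivial)
    rw [h1, h3]
    rfl
  -- natural form implies the full 2D period condition
  have full_of : ∀ x : {x // x ∈ X}, ((φ ^ k) x).val = shiftZ b x.val →
      ∀ w : ℤ × ℤ, eta X φ x (w + v) = eta X φ x w := by
    intro x hNF w
    by_cases h2 : 0 ≤ v.2
    · have hk : (k : ℤ) = v.2 := by simp [hkdef]; omega
      have hb : b = -v.1 := if_pos h2
      set y : {x // x ∈ X} := (φ ^ (v.2 : ℤ)) x with hy
      have hyval : y.val = shiftZ (-v.1) x.val := by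
        rw [hy, ← hk, zpow_natCast, hNF, hb]
      have hcz := Stmt17Aux.comm1_zpow X hX φ hc1 w.2 (-v.1) x y hyval
      have he : (φ ^ (w.2 + v.2)) x = (φ ^ w.2) y := by
        rw [hy, ← Equiv.Perm.mul_apply, ← zpow_add]
      show ((φ ^ (w + v).2) x).val (w + v).1 = ((φ ^ w.2) x).val w.1
      have hsnd : (w + v).2 = w.2 + v.2 := rfl
      have hfst : (w + v).1 = w.1 + v.1 := rfl
      rw [hsnd, hfst, he, hcz]
      simp only [Stmt17Aux.shiftZ_apply]
      congr 1
      ring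
    · have hk : (k : ℤ) = -v.2 := by simp [hkdef]; omega
      have hb : b = v.1 := if_neg h2
      set z : {x // x ∈ X} := (φ ^ (-v.2 : ℤ)) x with hz
      have hzval : z.val = shiftZ v.1 x.val := by
        rw [hz, ← hk, zpow_natCast, hNF, hb]
      have hcz := Stmt17Aux.comm1_zpow X hX φ hc1 (w.2 + v.2) v.1 x z hzval
      have he : (φ ^ (w.2 + v.2)) z = (φ ^ w.2) x := by
        rw [hz, ← Equiv.Perm.mul_apply, ← zpow_add]
        congr 1
        ring
      show ((φ ^ (w + v).2) x).val (w + v).1 = ((φ ^ w.2) x).val w.1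
      have hsnd : (w + v).2 = w.2 + v.2 := rfl
      have hfst : (w + v).1 = w.1 + v.1 := rfl
      rw [hsnd, hfst, ← he, hcz]
      simp only [Stmt17Aux.shiftZ_apply]
  have hNF1 : ((φ ^ k) x₁).val = shiftZ b x₁.val := key x₁.val x₁.2
  have hNF2 : ((φ ^ k) x₂).val = shiftZ b x₂.val := key x₂.val x₂.2
  exact hdisj v hvF ⟨full_of x₁ hNF1, full_of x₂ hNF2⟩
end
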